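/- Let S be an n×n complex matrix with every entry in {0, 1, −1} and with transpose Sᵀ = −S, with spectral decomposition S = ∑_r (i·λ_r)·F_r where λ_1,…,λ_m are distinct reals and F_1,…,F_m are Hermitian idempotents, and let a be an index (vertex). Then there exists t > 0 with exp(tS)·e_a = e_a if and only if for all indices r, s in the eigenvalue support of a (i.e. F_r·e_a ≠ 0 and F_s·e_a ≠ 0) with λ_s ≠ 0, the ratio λ_r/λ_s is rational. -/

import Mathlib

open Matrix
open scoped ComplexOrder

/-- The transition matrix `exp(tS)` of an oriented graph. -/
noncomputable def expT {n : ℕ} (S : Matrix (Fin n) (Fin n) ℂ) (t : ℝ) :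
    Matrix (Fin n) (Fin n) ℂ :=
  NormedSpace.exp ((t : ℂ) • S)

/-- Applying `*ᵥ v` is a linear map in the matrix. -/
noncomputable def mulVecL {n : ℕ} (v : Fin n → ℂ) :
    Matrix (Fin n) (Fin n) ℂ →ₗ[ℂ] (Fin n → ℂ) where
  toFun B := B *ᵥ v
  map_add' B C := Matrix.add_mulVec B C v
  map_smul' r B := Matrix.smul_mulVec r B v

lemma mulVec_sumv {n m : ℕ} (M : Matrix (Fin n) (Fin n) ℂ) (f : Fin m → Fin n → ℂ) :
    M *ᵥ (∑ r, f r) = ∑ r, M *ᵥ f r := by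
  ext i
  simp only [Matrix.mulVec, dotProduct, Finset.sum_apply, Finset.mul_sum]
  exact Finset.sum_comm

lemma exp_mulVec_eigen {n : ℕ} (A : Matrix (Fin n) (Fin n) ℂ) (v : Fin n → ℂ) (c : ℂ)
    (h : A *ᵥ v = c • v) : NormedSpace.exp A *ᵥ v = Complex.exp c • v := by
  have hk : ∀ k : ℕ, A ^ k *ᵥ v = c ^ k • v := by
    intro k
    induction k with
    | zero => simp [Matrix.one_mulVec]
    | succ k ih =>
      rw [pow_succ', ← Matrix.mulVec_mulVec, ih, Matrix.mulVec_smul, h, smul_smul,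
        ← pow_succ]
  letI : SeminormedRing (Matrix (Fin n) (Fin n) ℂ) := Matrix.linftyOpSemiNormedRing
  letI : NormedRing (Matrix (Fin n) (Fin n) ℂ) := Matrix.linftyOpNormedRing
  letI : NormedAlgebra ℂ (Matrix (Fin n) (Fin n) ℂ) := Matrix.linftyOpNormedAlgebra
  have hsum := (NormedSpace.exp_series_hasSum_exp' (𝕂 := ℂ) A).mapL
    (LinearMap.toContinuousLinearMap (mulVecL v))
  have hsum2 : HasSum (fun k : ℕ => (((Nat.factorial k) : ℂ)⁻¹ * c ^ k) • v)
      ((LinearMap.toContinuousLinearMap (mulVecL v)) (NormedSpace.exp A)) := by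
    refine hsum.congr_fun fun k => ?_
    show (((Nat.factorial k) : ℂ)⁻¹ * c ^ k) • v = ((((Nat.factorial k) : ℂ))⁻¹ • A ^ k) *ᵥ v
    rw [Matrix.smul_mulVec, hk k, smul_smul]
  have h1 : HasSum (fun k : ℕ => ((Nat.factorial k) : ℂ)⁻¹ * c ^ k) (Complex.exp c) := by
    have := NormedSpace.exp_series_hasSum_exp' (𝕂 := ℂ) c
    simp only [smul_eq_mul] at this
    rwa [Complex.exp_eq_exp_ℂ]
  have h2 := h1.smul_const v
  exact (HasSum.unique hsum2 h2 :
    (LinearMap.toContinuousLinearMap (mulVecL v)) (NormedSpace.exp A)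
      = Complex.exp c • v)

lemma exp_I_mul_eq_one_iff (t x : ℝ) :
    Complex.exp (Complex.I * t * x) = 1 ↔ ∃ k : ℤ, t * x = 2 * Real.pi * k := by
  rw [Complex.exp_eq_one_iff]
  constructor
  · rintro ⟨k, hk⟩
    refine ⟨k, ?_⟩
    have h3 : Complex.I * ((t : ℂ) * (x : ℂ)) = Complex.I * ((k : ℂ) * (2 * (Real.pi : ℂ))) := by
      rw [mul_assoc] at hk; rw [hk]; ring
    have h4 := mul_left_cancel₀ Complex.I_ne_zero h3
    have h5 : ((t * x : ℝ) : ℂ) = ((2 * Real.pi * k : ℝ) : ℂ) := by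
      push_cast
      linear_combination h4
    exact_mod_cast h5
  · rintro ⟨k, hk⟩
    refine ⟨k, ?_⟩
    have h5 : ((t * x : ℝ) : ℂ) = ((2 * Real.pi * k : ℝ) : ℂ) := Complex.ofReal_inj.mpr hk
    push_cast at h5
    linear_combination Complex.I * h5

/-- Let `S` be the adjacency matrix of an oriented graph
(entries in `{0,1,−1}`, `Sᵀ = −S`) with spectral decomposition
`S = ∑ (i·λ_r) • F_r`, and let `a` be a vertex. Then `exp(tS)·e_a = e_a` for
some `t > 0` if and only if `λ_r/λ_s` is rational for all `r`, `s` in the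
eigenvalue support of `a` with `λ_s ≠ 0`. -/
theorem stmt_18 {n m : ℕ} (hn : 1 ≤ n)
    (S : Matrix (Fin n) (Fin n) ℂ)
    (hS01 : ∀ i j, S i j = 0 ∨ S i j = 1 ∨ S i j = -1)
    (hSskew : Sᵀ = -S)
    (lam : Fin m → ℝ) (hlam : Function.Injective lam)
    (F : Fin m → Matrix (Fin n) (Fin n) ℂ)
    (hF0 : ∀ r, F r ≠ 0)
    (hFherm : ∀ r, (F r).IsHermitian)
    (hFmul : ∀ r s : Fin m, F r * F s = if r = s then F r else 0)
    (hFsum : ∑ r, F r = 1)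
    (hspec : S = ∑ r, (Complex.I * (lam r : ℂ)) • F r)
    (a : Fin n) :
    (∃ t : ℝ, 0 < t ∧ expT S t *ᵥ Pi.single a 1 = Pi.single a 1) ↔
      (∀ r s : Fin m, F r *ᵥ Pi.single a 1 ≠ 0 → F s *ᵥ Pi.single a 1 ≠ 0 →
        lam s ≠ 0 → ∃ q : ℚ, lam r / lam s = (q : ℝ)) := by
  set e : Fin n → ℂ := Pi.single a 1 with he
  -- S acts on F r *ᵥ e as the eigenvalue i λ_r
  have hSF : ∀ r, S *ᵥ (F r *ᵥ e) = (Complex.I * (lam r : ℂ)) • (F r *ᵥ e) := by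
    intro r
    rw [Matrix.mulVec_mulVec]
    have hSFr : S * F r = (Complex.I * (lam r : ℂ)) • F r := by
      rw [hspec, Finset.sum_mul]
      simp_rw [smul_mul_assoc, hFmul]
      rw [Finset.sum_eq_single r]
      · rw [if_pos rfl]
      · intro b _ hb; rw [if_neg hb, smul_zero]
      · intro hmem; exact absurd (Finset.mem_univ r) hmem
    rw [hSFr, Matrix.smul_mulVec]
  -- exp(tS) acts on F r *ᵥ e as exp(i t λ_r)
  have hexp : ∀ (t : ℝ) (r : Fin m),
      expT S t *ᵥ (F r *ᵥ e) = Complex.exp (Complex.I * t * lam r) • (F r *ᵥ e) := by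
    intro t r
    refine exp_mulVec_eigen _ _ _ ?_
    rw [Matrix.smul_mulVec, hSF r, smul_smul]
    congr 1
    ring
  -- decomposition of e
  have hdecomp : e = ∑ r, F r *ᵥ e := by
    have h1 : (∑ r, F r) *ᵥ e = ∑ r, F r *ᵥ e := map_sum (mulVecL e) F Finset.univ
    rw [hFsum, Matrix.one_mulVec] at h1
    exact h1
  have hFv : ∀ s r : Fin m, F s *ᵥ (F r *ᵥ e) = if s = r then F s *ᵥ e else 0 := by
    intro s r
    rw [Matrix.mulVec_mulVec, hFmul]
    split_ifs with hsr
    · rfl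
    · exact Matrix.zero_mulVec e
  have hexpand : ∀ t : ℝ,
      expT S t *ᵥ e = ∑ r, Complex.exp (Complex.I * t * lam r) • (F r *ᵥ e) := by
    intro t
    conv_lhs => rw [hdecomp]
    rw [mulVec_sumv]
    exact Finset.sum_congr rfl fun r _ => hexp t r
  -- the fixed-point condition in terms of eigenvalues
  have hiff : ∀ t : ℝ, (expT S t *ᵥ e = e) ↔
      ∀ r, F r *ᵥ e ≠ 0 → Complex.exp (Complex.I * t * lam r) = 1 := by
    intro t
    constructor
    · intro ht r hr
      have h1 : F r *ᵥ (expT S t *ᵥ e) = F r *ᵥ e := by rw [ht]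
      rw [hexpand t] at h1
      have h2 : F r *ᵥ (∑ s, Complex.exp (Complex.I * t * lam s) • (F s *ᵥ e))
          = ∑ s, Complex.exp (Complex.I * t * lam s) • (F r *ᵥ (F s *ᵥ e)) := by
        rw [mulVec_sumv]
        exact Finset.sum_congr rfl fun s _ => Matrix.mulVec_smul (F r) _ _
      rw [h2] at h1
      simp_rw [hFv r] at h1
      rw [Finset.sum_eq_single r (fun b _ hb => by rw [if_neg (Ne.symm hb), smul_zero])
        (fun hmem => absurd (Finset.mem_univ r) hmem)] at h1
      rw [if_pos rfl] at h1
      have h3 : (Complex.exp (Complex.I * t * lam r) - 1) • (F r *ᵥ e) = 0 := by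
        rw [sub_smul, one_smul, h1, sub_self]
      rcases smul_eq_zero.1 h3 with h4 | h4
      · exact sub_eq_zero.1 h4
      · exact absurd h4 hr
    · intro hcond
      rw [hexpand t]
      conv_rhs => rw [hdecomp]
      refine Finset.sum_congr rfl fun r _ => ?_
      by_cases hr : F r *ᵥ e = 0
      · rw [hr, smul_zero]
      · rw [hcond r hr, one_smul]
  constructor
  · rintro ⟨t, ht, hfix⟩ r s hr hs hls
    have h1 := (hiff t).1 hfix
    obtain ⟨kr, hkr⟩ := (exp_I_mul_eq_one_iff t (lam r)).1 (h1 r hr)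
    obtain ⟨ks, hks⟩ := (exp_I_mul_eq_one_iff t (lam s)).1 (h1 s hs)
    have ht0 : t ≠ 0 := ne_of_gt ht
    have hksR : (ks : ℝ) ≠ 0 := by
      intro h0
      apply hls
      have h2 : t * lam s = 0 := by rw [hks, h0, mul_zero]
      rcases mul_eq_zero.1 h2 with h3 | h3
      · exact absurd h3 ht0
      · exact h3
    refine ⟨(kr : ℚ) / (ks : ℚ), ?_⟩
    push_cast
    rw [div_eq_div_iff hls hksR]
    have h5 : t * (lam r * ks) = t * ((kr : ℝ) * lam s) := by
      calc t * (lam r * ks) = (t * lam r) * ks := by ring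
        _ = (2 * Real.pi * kr) * ks := by rw [hkr]
        _ = (2 * Real.pi * ks) * kr := by ring
        _ = (t * lam s) * kr := by rw [hks]
        _ = t * ((kr : ℝ) * lam s) := by ring
    exact mul_left_cancel₀ ht0 h5
  · intro h
    by_cases hall : ∀ r, F r *ᵥ e ≠ 0 → lam r = 0
    · refine ⟨1, one_pos, (hiff 1).2 fun r hr => ?_⟩
      exact (exp_I_mul_eq_one_iff 1 (lam r)).2 ⟨0, by rw [hall r hr]; push_cast; ring⟩
    · push_neg at hall
      obtain ⟨s, hs, hls⟩ := hall
      have hq : ∀ r, ∃ q : ℚ, F r *ᵥ e ≠ 0 → lam r = (q : ℝ) * lam s := by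
        intro r
        by_cases hr : F r *ᵥ e = 0
        · exact ⟨0, fun h' => absurd hr h'⟩
        · obtain ⟨qr, hqr⟩ := h r s hr hs hls
          rw [div_eq_iff hls] at hqr
          exact ⟨qr, fun _ => hqr⟩
      choose q hq using hq
      set N : ℕ := ∏ r, (q r).den with hN
      have hN0 : 0 < N := Finset.prod_pos fun r _ => (q r).pos
      set t₀ : ℝ := 2 * Real.pi * N / lam s with ht₀def
      have h2piN : 2 * Real.pi * (N : ℝ) ≠ 0 := by
        have : (0 : ℝ) < 2 * Real.pi * N := by positivity
        exact ne_of_gt this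
      have ht₀ : t₀ ≠ 0 := div_ne_zero h2piN hls
      have hkey : ∀ r, F r *ᵥ e ≠ 0 → ∃ k : ℤ, t₀ * lam r = 2 * Real.pi * k := by
        intro r hr
        obtain ⟨c, hc⟩ : ((q r).den : ℤ) ∣ (N : ℤ) :=
          Int.natCast_dvd_natCast.2 (Finset.dvd_prod_of_mem _ (Finset.mem_univ r))
        refine ⟨c * (q r).num, ?_⟩
        have hden : ((q r).den : ℚ) * q r = ((q r).num : ℚ) := by
          have hd0 : ((q r).den : ℚ) ≠ 0 := by exact_mod_cast (q r).den_ne_zero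
          rw [mul_comm, ← eq_div_iff hd0]
          exact (Rat.num_div_den (q r)).symm
        have hNq : (N : ℚ) * q r = ((c * (q r).num : ℤ) : ℚ) := by
          have hNc : (N : ℚ) = ((q r).den : ℚ) * (c : ℚ) := by exact_mod_cast hc
          rw [hNc]
          push_cast
          calc ((q r).den : ℚ) * (c : ℚ) * q r = (c : ℚ) * (((q r).den : ℚ) * q r) := by ring
            _ = (c : ℚ) * ((q r).num : ℚ) := by rw [hden]
        have hreal : (N : ℝ) * ((q r : ℚ) : ℝ) = ((c * (q r).num : ℤ) : ℝ) := by
          exact_mod_cast congrArg (fun x : ℚ => (x : ℝ)) hNq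
        rw [hq r hr, ht₀def]
        push_cast at hreal ⊢
        rw [div_mul_eq_mul_div, div_eq_iff hls]
        linear_combination (2 * Real.pi * lam s) * hreal
      refine ⟨|t₀|, abs_pos.2 ht₀, (hiff |t₀|).2 fun r hr => ?_⟩
      obtain ⟨k, hk⟩ := hkey r hr
      rcases abs_choice t₀ with h' | h'
      · exact (exp_I_mul_eq_one_iff _ _).2 ⟨k, by rw [h', hk]⟩
      · refine (exp_I_mul_eq_one_iff _ _).2 ⟨-k, ?_⟩
        rw [h']
        push_cast
        rw [neg_mul, hk]
        ring
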